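/- Let m ≥ 1 be an odd integer. Define D : {0,1,…,4m−1} → ℚ by D(i) = −1/4 + i²/(4m) − θ(m−i) for 0 ≤ i < m, D(i) = −1/4 + (2m−i)²/(4m) for m ≤ i ≤ 2m, and D(i) = D(4m−i) for 2m < i < 4m, where θ(k) ∈ {0,1} is the reduction of k modulo 2. Then the set { i ∈ {0,1,…,4m−1} : D(i) = −1/4 + 1/(4m) } equals {1, 2m−1, 2m+1, 4m−1}. -/

import Mathlib

/-- The correction terms `D(i) = d(S³_{T(2m+1,2)}(4m), i)` of formula (7.5) (with `n = m`,
`ζ = 0`): `D(i) = −1/4 + i²/(4m) − θ(m−i)` for `0 ≤ i < m`,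
`D(i) = −1/4 + (2m−i)²/(4m)` for `m ≤ i ≤ 2m`, and `D(i) = D(4m−i)` for `2m < i < 4m`,
where `θ(k) = k mod 2 ∈ {0,1}`. -/
def corrD (m i : ℤ) : ℚ :=
  let j : ℤ := if i ≤ 2 * m then i else 4 * m - i
  if j < m then -1 / 4 + ((j : ℚ)) ^ 2 / (4 * (m : ℚ)) - (((m - j) % 2 : ℤ) : ℚ)
  else -1 / 4 + (((2 * m - j : ℤ) : ℚ)) ^ 2 / (4 * (m : ℚ))

lemma key (m j : ℤ) (hm : 1 ≤ m) (hodd : Odd m) (h0 : 0 ≤ j) (h2 : j ≤ 2 * m) :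
    ((if j < m then -1 / 4 + ((j : ℚ)) ^ 2 / (4 * (m : ℚ)) - (((m - j) % 2 : ℤ) : ℚ)
      else -1 / 4 + (((2 * m - j : ℤ) : ℚ)) ^ 2 / (4 * (m : ℚ)))
      = -1 / 4 + 1 / (4 * (m : ℚ))) ↔ (j = 1 ∨ j = 2 * m - 1) := by
  have hm0 : (m : ℚ) ≠ 0 := by
    exact_mod_cast (by omega : m ≠ 0)
  have hmod : m % 2 = 1 := Int.odd_iff.mp hodd
  constructor
  · intro hD
    by_cases hj : j < m
    · rw [if_pos hj] at hD
      have hQ : (j : ℚ) ^ 2 = 1 + 4 * m * (((m - j) % 2 : ℤ) : ℚ) := by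
        field_simp at hD
        linarith
      have hZ : j ^ 2 = 1 + 4 * m * ((m - j) % 2) := by exact_mod_cast hQ
      rcases Int.emod_two_eq (m - j) with h | h
      · rw [h] at hZ
        have h1 : (j - 1) * (j + 1) = 0 := by ring_nf; linarith
        rcases mul_eq_zero.mp h1 with h' | h'
        · left; omega
        · omega
      · -- θ = 1 : j even, j² = 4m+1, impossible
        rw [h] at hZ
        have hje : j % 2 = 0 := by omega
        obtain ⟨k, hk⟩ : ∃ k, j = 2 * k := ⟨j / 2, by omega⟩
        have : 4 * (k * k) = 4 * m + 1 := by nlinarith [hZ, hk]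
        omega
    · rw [if_neg hj] at hD
      push_neg at hj
      field_simp at hD
      rcases (show (2 * m - j : ℚ) = 1 ∨ (2 * m - j : ℚ) = -1 by
        have h3 : ((2 * m - j : ℚ) - 1) * ((2 * m - j : ℚ) + 1) = 0 := by
          push_cast at hD; nlinarith [hD]
        rcases mul_eq_zero.mp h3 with h3 | h3
        · left; linarith
        · right; linarith) with h' | h'
      · right
        have : (2 * m - j : ℚ) = 1 := by linarith
        have : (2 * m - j : ℤ) = 1 := by exact_mod_cast this
        omega
      · have : (2 * m - j : ℚ) = -1 := by linarith
        have : (2 * m - j : ℤ) = -1 := by exact_mod_cast this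
        omega
  · rintro (rfl | rfl)
    · by_cases hj : (1 : ℤ) < m
      · rw [if_pos hj]
        have hθ : (m - 1) % 2 = 0 := by omega
        rw [hθ]
        push_cast
        field_simp
        ring
      · have hm1 : m = 1 := by omega
        rw [if_neg (by omega : ¬ (1 : ℤ) < m)]
        have : (2 * m - 1 : ℤ) = 1 := by omega
        rw [this]
        push_cast
        field_simp
    · rw [if_neg (by omega : ¬ (2 * m - 1 < m))]
      have : (2 * m - (2 * m - 1) : ℤ) = 1 := by omega
      rw [this]
      push_cast
      field_simp

/-- Odd-`m` case in the proof of Lemma 7.8: for odd `m ≥ 1`, the level set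
`{ i ∈ {0,…,4m−1} : D(i) = −1/4 + 1/(4m) }` equals `{1, 2m−1, 2m+1, 4m−1}`. -/
theorem stmt_14 (m : ℤ) (hm : 1 ≤ m) (hodd : Odd m) :
    {i : ℤ | 0 ≤ i ∧ i < 4 * m ∧ corrD m i = -1 / 4 + 1 / (4 * (m : ℚ))} =
      {1, 2 * m - 1, 2 * m + 1, 4 * m - 1} := by
  ext i
  simp only [Set.mem_setOf_eq, Set.mem_insert_iff, Set.mem_singleton_iff]
  constructor
  · rintro ⟨h0, h4, hD⟩
    unfold corrD at hD
    by_cases hi : i ≤ 2 * m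
    · rw [if_pos hi] at hD
      rcases (key m i hm hodd h0 hi).mp hD with h | h
      · exact Or.inl h
      · exact Or.inr (Or.inl h)
    · rw [if_neg hi] at hD
      push_neg at hi
      rcases (key m (4 * m - i) hm hodd (by omega) (by omega)).mp hD with h | h
      · exact Or.inr (Or.inr (Or.inr (by omega)))
      · exact Or.inr (Or.inr (Or.inl (by omega)))
  · rintro (rfl | rfl | rfl | rfl)
    · refine ⟨by omega, by omega, ?_⟩
      unfold corrD
      rw [if_pos (by omega : (1 : ℤ) ≤ 2 * m)]
      exact (key m 1 hm hodd (by omega) (by omega)).mpr (Or.inl rfl)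
    · refine ⟨by omega, by omega, ?_⟩
      unfold corrD
      rw [if_pos (by omega : (2 * m - 1 : ℤ) ≤ 2 * m)]
      exact (key m (2 * m - 1) hm hodd (by omega) (by omega)).mpr (Or.inr rfl)
    · refine ⟨by omega, by omega, ?_⟩
      unfold corrD
      by_cases hle : (2 * m + 1 : ℤ) ≤ 2 * m
      · omega
      rw [if_neg hle]
      have h : (4 * m - (2 * m + 1) : ℤ) = 2 * m - 1 := by ring
      rw [h]
      exact (key m (2 * m - 1) hm hodd (by omega) (by omega)).mpr (Or.inr rfl)
    · refine ⟨by omega, by omega, ?_⟩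
      unfold corrD
      by_cases hle : (4 * m - 1 : ℤ) ≤ 2 * m
      · omega
      rw [if_neg hle]
      have h : (4 * m - (4 * m - 1) : ℤ) = 1 := by ring
      rw [h]
      exact (key m 1 hm hodd (by omega) (by omega)).mpr (Or.inl rfl)
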